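/- Every convex body Ω in ℝ² of constant width 1 has inradius at least 1 − √3/3, and the Reuleaux triangle R of width 1 has inradius exactly 1 − √3/3; that is, the Reuleaux triangle minimizes the inradius among planar shapes of constant width 1. -/

import Mathlib

open MeasureTheory Metric Real Set
open scoped ENNReal

noncomputable section

/-- The Euclidean plane ℝ². -/
abbrev Plane := EuclideanSpace ℝ (Fin 2)

/-- Point of the plane with given coordinates. -/
def pt (a b : ℝ) : Plane := (EuclideanSpace.equiv (Fin 2) ℝ).symm ![a, b]

/-- A convex body: compact, convex, with nonempty interior. -/
def IsConvexBody (K : Set Plane) : Prop :=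
  IsCompact K ∧ Convex ℝ K ∧ (interior K).Nonempty

/-- `K` has constant width 1: in every direction `u` of norm one, the width of `K` is 1. -/
def HasConstantWidth1 (K : Set Plane) : Prop :=
  ∀ u : Plane, ‖u‖ = 1 →
    sSup ((fun x => (inner ℝ x u : ℝ)) '' K) - sInf ((fun x => (inner ℝ x u : ℝ)) '' K) = 1

/-- The Reuleaux triangle of width 1. -/
def ReuleauxTriangle : Set Plane :=
  closedBall (pt 0 0) 1 ∩ closedBall (pt 1 0) 1 ∩ closedBall (pt (1/2) (Real.sqrt 3 / 2)) 1

/-- The inner ℝ parallel set of `Ω` at distance `t`. -/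
def innerParallel (Ω : Set Plane) (t : ℝ) : Set Plane :=
  {x : Plane | closedBall x t ⊆ Ω}

/-- The Cheeger constant of `Ω`: infimum of perimeter/area ratios over convex bodies in `Ω`. -/
def cheeger (Ω : Set Plane) : ℝ≥0∞ :=
  ⨅ (E : Set Plane) (_ : IsConvexBody E) (_ : E ⊆ Ω), μH[1] (frontier E) / volume E

/-- The inradius of `K`: supremum of radii of closed balls contained in `K`. -/
def inradius (K : Set Plane) : ℝ :=
  sSup {r : ℝ | 0 ≤ r ∧ ∃ x : Plane, closedBall x r ⊆ K}

/-- If a closed ball is in another, center-distance + radius ≤ bigger radius. -/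
lemma ball_in_ball {x y : Plane} {r s : ℝ} (hr : 0 ≤ r)
    (h : closedBall x r ⊆ closedBall y s) : dist x y + r ≤ s := by
  obtain ⟨u, hu1, hu2⟩ : ∃ u : Plane, ‖u‖ = 1 ∧ (inner ℝ (x - y) u : ℝ) = dist x y := by
    rcases eq_or_ne x y with rfl | hxy
    · refine ⟨(EuclideanSpace.equiv (Fin 2) ℝ).symm ![1, 0], ?_, by simp⟩
      rw [EuclideanSpace.norm_eq]; simp [Fin.sum_univ_two]
    · refine ⟨‖x - y‖⁻¹ • (x - y), ?_, ?_⟩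
      · rw [norm_smul, norm_inv, norm_norm, inv_mul_cancel₀ (by simpa [sub_eq_zero] using hxy)]
      · rw [real_inner_smul_right, real_inner_self_eq_norm_sq, dist_eq_norm]
        have h0 : ‖x - y‖ ≠ 0 := norm_ne_zero_iff.2 (by simpa [sub_eq_zero] using hxy)
        field_simp
  have hz : x + r • u ∈ closedBall y s := h (by simp [dist_eq_norm, norm_smul, hr, abs_of_nonneg hr, hu1])
  have h1 : dist x y + r = (inner ℝ (x + r • u - y) u : ℝ) := by
    have : x + r • u - y = (x - y) + r • u := by abel
    rw [this, inner_add_left, real_inner_smul_left, real_inner_self_eq_norm_sq, hu1, hu2]; ring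
  calc dist x y + r = (inner ℝ (x + r • u - y) u : ℝ) := h1
    _ ≤ ‖x + r • u - y‖ * ‖u‖ := real_inner_le_norm _ _
    _ = dist (x + r • u) y := by rw [hu1, mul_one, dist_eq_norm]
    _ ≤ s := by simpa [mem_closedBall] using hz

lemma diam_le_one {Ω : Set Plane} (hc : IsCompact Ω) (hw : HasConstantWidth1 Ω)
    {x y : Plane} (hx : x ∈ Ω) (hy : y ∈ Ω) : dist x y ≤ 1 := by
  rcases eq_or_ne x y with rfl | hxy
  · simp
  set u : Plane := ‖x - y‖⁻¹ • (x - y) with hu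
  have hxy' : x - y ≠ 0 := by simpa [sub_eq_zero] using hxy
  have hu1 : ‖u‖ = 1 := by
    rw [hu, norm_smul, norm_inv, norm_norm, inv_mul_cancel₀ (norm_ne_zero_iff.2 hxy')]
  have hcont : Continuous (fun z : Plane => (inner ℝ z u : ℝ)) :=
    Continuous.inner continuous_id continuous_const
  have himg : IsCompact ((fun z : Plane => (inner ℝ z u : ℝ)) '' Ω) := hc.image hcont
  have hne : ((fun z : Plane => (inner ℝ z u : ℝ)) '' Ω).Nonempty := ⟨_, mem_image_of_mem _ hx⟩
  have h1 : (inner ℝ x u : ℝ) ≤ sSup ((fun z : Plane => (inner ℝ z u : ℝ)) '' Ω) :=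
    le_csSup himg.bddAbove (mem_image_of_mem _ hx)
  have h2 : sInf ((fun z : Plane => (inner ℝ z u : ℝ)) '' Ω) ≤ (inner ℝ y u : ℝ) :=
    csInf_le himg.bddBelow (mem_image_of_mem _ hy)
  have key : (inner ℝ x u : ℝ) - inner ℝ y u = dist x y := by
    rw [← inner_sub_left, hu, real_inner_smul_right, real_inner_self_eq_norm_sq, dist_eq_norm]
    have h0 : ‖x - y‖ ≠ 0 := norm_ne_zero_iff.2 hxy'
    field_simp
  linarith [hw u hu1]

lemma sep_point {K : Set Plane} (hK : Convex ℝ K) (hcl : IsClosed K) (hne : K.Nonempty)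
    {y : Plane} (hy : y ∉ K) : ∃ (u : Plane) (ε : ℝ), ‖u‖ = 1 ∧ 0 < ε ∧
      ∀ x ∈ K, ε ≤ (inner ℝ (x - y) u : ℝ) := by
  obtain ⟨f, s, hfy, hfs⟩ := geometric_hahn_banach_point_closed hK hcl hy
  obtain ⟨v, hv⟩ := (InnerProductSpace.toDual ℝ Plane).surjective f
  have hvx : ∀ x, (inner ℝ v x : ℝ) = f x := fun x => by rw [← hv]; rfl
  obtain ⟨x₀, hx₀⟩ := hne
  have hvne : v ≠ 0 := by
    rintro rfl
    have h1 := hfs x₀ hx₀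
    rw [← hvx x₀, inner_zero_left] at h1
    rw [← hvx y, inner_zero_left] at hfy
    linarith
  have hvnorm : (0:ℝ) < ‖v‖ := norm_pos_iff.2 hvne
  refine ⟨‖v‖⁻¹ • v, (s - f y) / ‖v‖, ?_, div_pos (by linarith) hvnorm, ?_⟩
  · rw [norm_smul, norm_inv, norm_norm, inv_mul_cancel₀ hvnorm.ne']
  · intro x hx
    have hsx := hfs x hx
    rw [real_inner_smul_right, real_inner_comm, inner_sub_right, hvx x, hvx y,
      div_eq_inv_mul]
    exact mul_le_mul_of_nonneg_left (by linarith) (inv_nonneg.2 hvnorm.le)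

set_option maxHeartbeats 1000000 in
lemma jung {Ω : Set Plane} (hc : IsCompact Ω) (hne : Ω.Nonempty)
    (hd : ∀ x ∈ Ω, ∀ y ∈ Ω, dist x y ≤ 1) :
    ∃ c : Plane, ∀ x ∈ Ω, dist c x ≤ Real.sqrt 3 / 3 := by
  classical
  set f : Plane → ℝ := fun c => sSup ((dist c) '' Ω) with hf
  have himg : ∀ c : Plane, IsCompact ((dist c) '' Ω) := fun c => hc.image (continuous_const.dist continuous_id)
  have himgne : ∀ c : Plane, ((dist c) '' Ω).Nonempty := fun c => hne.image _
  have hfx : ∀ c : Plane, ∀ x ∈ Ω, dist c x ≤ f c := fun c x hx =>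
    le_csSup (himg c).bddAbove (mem_image_of_mem _ hx)
  have hfattain : ∀ c : Plane, ∃ x ∈ Ω, f c = dist c x := by
    intro c
    obtain ⟨x, hxΩ, hxmax⟩ := hc.exists_isMaxOn hne (continuous_const.dist continuous_id).continuousOn
    exact ⟨x, hxΩ, IsGreatest.csSup_eq ⟨mem_image_of_mem _ hxΩ, fun y ⟨z, hz, hzy⟩ => hzy ▸ hxmax hz⟩⟩
  have hflip : ∀ c c' : Plane, f c ≤ dist c c' + f c' := by
    intro c c'
    refine csSup_le (himgne c) ?_
    rintro y ⟨x, hx, rfl⟩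
    calc dist c x ≤ dist c c' + dist c' x := dist_triangle _ _ _
      _ ≤ dist c c' + f c' := by linarith [hfx c' x hx]
  have hfcont : Continuous f := by
    refine (LipschitzWith.of_dist_le_mul (K := 1) fun a b => ?_).continuous
    rw [NNReal.coe_one, one_mul, Real.dist_eq, abs_sub_le_iff]
    exact ⟨by linarith [hflip a b], by linarith [hflip b a, (dist_comm a b : dist a b = dist b a)]⟩
  obtain ⟨x₀, hx₀⟩ := hne
  obtain ⟨c₀, hc₀T, hmin⟩ := (isCompact_closedBall x₀ 1).exists_isMinOn
    ⟨x₀, mem_closedBall_self zero_le_one⟩ hfcont.continuousOn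
  have hfx₀ : f x₀ ≤ 1 := csSup_le (himgne x₀) (by rintro y ⟨x, hx, rfl⟩; exact hd x₀ hx₀ x hx)
  have hglobal : ∀ c : Plane, f c₀ ≤ f c := by
    intro c
    by_cases hcT : c ∈ closedBall x₀ 1
    · exact hmin hcT
    · have h1 : 1 < dist c x₀ := by simpa [mem_closedBall, dist_comm] using hcT
      have h2 : dist c x₀ ≤ f c := hfx c x₀ hx₀
      have h3 : f c₀ ≤ f x₀ := hmin (mem_closedBall_self zero_le_one)
      linarith
  set r : ℝ := f c₀ with hrdef
  have hr0 : 0 ≤ r := le_trans dist_nonneg (hfx c₀ x₀ hx₀)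
  by_cases hrsmall : r ≤ Real.sqrt 3 / 3
  · exact ⟨c₀, fun x hx => le_trans (hfx c₀ x hx) hrsmall⟩
  push_neg at hrsmall
  exfalso
  have hs3 : Real.sqrt 3 / 3 > 0 := by positivity
  have hrpos : 0 < r := lt_trans hs3 hrsmall
  have hr2 : 1/3 < r^2 := by
    have : (Real.sqrt 3 / 3)^2 < r^2 := by
      apply sq_lt_sq' (by linarith) hrsmall
    rw [div_pow, sq_sqrt (by norm_num : (3:ℝ) ≥ 0)] at this
    norm_num at this
    linarith
  -- the set of farthest points
  set F : Set Plane := Ω ∩ (dist c₀) ⁻¹' {r} with hFdef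
  have hFmem : ∀ x, x ∈ F ↔ x ∈ Ω ∧ dist c₀ x = r := fun x => Iff.rfl
  have hFsub : F ⊆ Ω := fun x hx => hx.1
  have hFne : F.Nonempty := by
    obtain ⟨x, hxΩ, hxeq⟩ := hfattain c₀
    exact ⟨x, hxΩ, hxeq.symm⟩
  have hFclosed : IsClosed F :=
    hc.isClosed.inter ((isClosed_singleton).preimage (continuous_const.dist continuous_id))
  have hFcomp : IsCompact F := hc.of_isClosed_subset hFclosed hFsub
  -- key claim: c₀ is in the closure of the convex hull of F
  have hkey : c₀ ∈ closure (convexHull ℝ F) := by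
    by_contra hcl
    obtain ⟨u, ε, hu1, hε, hsep⟩ := sep_point ((convex_convexHull ℝ F).closure) isClosed_closure
      ((hFne.mono (subset_convexHull ℝ F)).mono subset_closure) hcl
    have hsepF : ∀ x ∈ F, ε ≤ (inner ℝ (x - c₀) u : ℝ) := fun x hx =>
      hsep x (subset_closure (subset_convexHull ℝ F hx))
    -- the "near" set
    set G : Set Plane := Ω ∩ (fun x : Plane => (inner ℝ (x - c₀) u : ℝ)) ⁻¹' (Iic (ε/2)) with hGdef
    have hGmem : ∀ x, x ∈ G ↔ x ∈ Ω ∧ (inner ℝ (x - c₀) u : ℝ) ≤ ε/2 := fun x => Iff.rfl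
    have hicont : Continuous (fun x : Plane => (inner ℝ (x - c₀) u : ℝ)) :=
      Continuous.inner (continuous_id.sub continuous_const) continuous_const
    have hGcomp : IsCompact G :=
      hc.of_isClosed_subset (hc.isClosed.inter (isClosed_Iic.preimage hicont)) (fun x hx => hx.1)
    set r' : ℝ := sSup ((dist c₀) '' G) with hr'def
    have hr'lt : r' < r := by
      rcases G.eq_empty_or_nonempty with hG | hG
      · rw [hr'def, hG, Set.image_empty, Real.sSup_empty]; exact hrpos
      · obtain ⟨xg, hxgG, hxgmax⟩ := hGcomp.exists_isMaxOn hG (continuous_const.dist continuous_id).continuousOn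
        have heq : r' = dist c₀ xg := IsGreatest.csSup_eq
          ⟨mem_image_of_mem _ hxgG, fun y ⟨z, hz, hzy⟩ => hzy ▸ hxgmax hz⟩
        rw [heq]
        rcases lt_or_eq_of_le (hfx c₀ xg hxgG.1) with h | h
        · exact h
        · exfalso
          have hxgF : xg ∈ F := ⟨hxgG.1, h⟩
          have h1' := hsepF xg hxgF
          have h2' : (inner ℝ (xg - c₀) u : ℝ) ≤ ε/2 := hxgG.2
          linarith
    have hr'bound : ∀ x ∈ G, dist c₀ x ≤ r' := fun x hx =>
      le_csSup (hGcomp.image (continuous_const.dist continuous_id)).bddAbove (mem_image_of_mem _ hx)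
    set δ : ℝ := min (ε/2) ((r - r')/2) with hδdef
    have hδpos : 0 < δ := lt_min (by linarith) (by linarith)
    set c₁ : Plane := c₀ + δ • u with hc₁def
    have hbound : ∀ x ∈ Ω, dist c₁ x ≤ max (r' + δ) (Real.sqrt (r^2 - δ*ε/2)) := by
      intro x hx
      by_cases hxG : x ∈ G
      · refine le_max_of_le_left ?_
        calc dist c₁ x ≤ dist c₁ c₀ + dist c₀ x := dist_triangle _ _ _
          _ ≤ δ + r' := by
              have h1 : dist c₁ c₀ = δ := by
                rw [hc₁def, dist_eq_norm, add_sub_cancel_left, norm_smul, hu1, mul_one,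
                  Real.norm_eq_abs, abs_of_pos hδpos]
              linarith [hr'bound x hxG]
          _ = r' + δ := by ring
      · refine le_max_of_le_right ?_
        have hxip : ε/2 < (inner ℝ (x - c₀) u : ℝ) := by
          by_contra hcon
          push_neg at hcon
          exact hxG ((hGmem x).2 ⟨hx, hcon⟩)
        have hsq : dist c₁ x ^ 2 ≤ r^2 - δ*ε/2 := by
          have hexp : dist c₁ x ^ 2 = dist c₀ x ^2 - 2*δ*(inner ℝ (x - c₀) u : ℝ) + δ^2 := by
            rw [dist_eq_norm, dist_eq_norm]
            have h1 : c₁ - x = -((x - c₀) - δ • u) := by rw [hc₁def]; abel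
            rw [h1, norm_neg, norm_sub_sq_real, real_inner_smul_right, norm_smul, hu1,
              Real.norm_eq_abs, abs_of_pos hδpos, norm_sub_rev]
            ring
          have hδε : δ ≤ ε/2 := min_le_left _ _
          have h2 : dist c₀ x ^ 2 ≤ r^2 := by
            have := hfx c₀ x hx
            nlinarith [dist_nonneg (x := c₀) (y := x)]
          nlinarith
        have h3 : 0 ≤ r^2 - δ*ε/2 := le_trans (sq_nonneg _) hsq
        calc dist c₁ x = Real.sqrt (dist c₁ x ^2) := by
              rw [Real.sqrt_sq dist_nonneg]
          _ ≤ Real.sqrt (r^2 - δ*ε/2) := Real.sqrt_le_sqrt hsq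
      -- end cases
    have hfc₁ : f c₁ ≤ max (r' + δ) (Real.sqrt (r^2 - δ*ε/2)) := by
      refine csSup_le (himgne c₁) ?_
      rintro y ⟨x, hx, rfl⟩
      exact hbound x hx
    have hmaxlt : max (r' + δ) (Real.sqrt (r^2 - δ*ε/2)) < r := by
      refine max_lt ?_ ?_
      · have : δ ≤ (r - r')/2 := min_le_right _ _
        linarith
      · rw [Real.sqrt_lt' hrpos]
        nlinarith
    have := hglobal c₁
    linarith
  -- now use an approximate convex combination
  have hη : (0:ℝ) < Real.sqrt ((r^2 - 1/3)/2) := Real.sqrt_pos.2 (by linarith)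
  obtain ⟨p, hp, hpd⟩ := Metric.mem_closure_iff.1 hkey _ hη
  obtain ⟨ι, hfin, z, w, hzF, hAI, hwpos, hwsum, hcombo⟩ := eq_pos_convex_span_of_mem_convexHull hp
  -- at most 3 points by Carathéodory + affine independence in the plane
  have hcard : (Fintype.card ι : ℝ) ≤ 3 := by
    have h1 := hAI.card_le_finrank_succ
    have h2 : Module.finrank ℝ (vectorSpan ℝ (Set.range z)) ≤ Module.finrank ℝ Plane :=
      Submodule.finrank_le _
    have h3 : Module.finrank ℝ Plane = 2 := finrank_euclideanSpace_fin
    have : Fintype.card ι ≤ 3 := by omega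
    exact_mod_cast this
  set v : ι → Plane := fun i => z i - c₀ with hvdef
  have hvr : ∀ i, ‖v i‖ = r := by
    intro i
    have hzi : z i ∈ F := hzF (Set.mem_range_self i)
    have : dist c₀ (z i) = r := hzi.2
    show ‖z i - c₀‖ = r
    rw [← dist_eq_norm, dist_comm]
    exact this
  have hsum : (∑ i, w i • v i) = p - c₀ := by
    simp only [hvdef, smul_sub]
    rw [Finset.sum_sub_distrib, hcombo, ← Finset.sum_smul, hwsum, one_smul]
  have hzΩ : ∀ i, z i ∈ Ω := fun i => hFsub (hzF (Set.mem_range_self i))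
  have hij : ∀ i j, r^2 - 1/2 ≤ (inner ℝ (v i) (v j) : ℝ) := by
    intro i j
    have hdist : dist (z i) (z j) ≤ 1 := hd _ (hzΩ i) _ (hzΩ j)
    have hd2 : ‖v i - v j‖^2 ≤ 1 := by
      have : v i - v j = z i - z j := by
        show (z i - c₀) - (z j - c₀) = z i - z j
        abel
      rw [this, ← dist_eq_norm]
      nlinarith [dist_nonneg (x := z i) (y := z j)]
    have hexp : ‖v i - v j‖^2 = r^2 - 2*(inner ℝ (v i) (v j) : ℝ) + r^2 := by
      rw [norm_sub_sq_real, hvr i, hvr j]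
    linarith
  have hdiag : ∀ i, (inner ℝ (v i) (v i) : ℝ) = r^2 := by
    intro i
    rw [real_inner_self_eq_norm_sq, hvr i]
  have hw0 : ∀ i, 0 ≤ w i := fun i => (hwpos i).le
  -- the squared norm of p - c₀
  have hnorm2 : ‖p - c₀‖^2 < (r^2 - 1/3)/2 := by
    have h1 : ‖p - c₀‖ = dist c₀ p := by rw [← dist_eq_norm, dist_comm]
    rw [h1]
    have := (Real.lt_sqrt dist_nonneg).1 hpd
    linarith
  have hexpand : ‖p - c₀‖^2 = ∑ i, w i * (∑ j, w j * (inner ℝ (v i) (v j) : ℝ)) := by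
    rw [← hsum, ← real_inner_self_eq_norm_sq, sum_inner]
    refine Finset.sum_congr rfl fun i _ => ?_
    rw [real_inner_smul_left, inner_sum]
    congr 1
    exact Finset.sum_congr rfl fun j _ => real_inner_smul_right _ _ _
  set S2 : ℝ := ∑ i, (w i)^2 with hS2def
  have hS2 : 1/3 ≤ S2 := by
    have h1 : (∑ i, w i)^2 ≤ (Fintype.card ι : ℝ) * S2 := by
      simpa using sq_sum_le_card_mul_sum_sq (s := (Finset.univ : Finset ι)) (f := w)
    rw [hwsum, one_pow] at h1
    have hS2nonneg : 0 ≤ S2 := Finset.sum_nonneg fun i _ => sq_nonneg _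
    have h2 : (Fintype.card ι : ℝ) * S2 ≤ 3 * S2 := mul_le_mul_of_nonneg_right hcard hS2nonneg
    linarith
  have hlow : (r^2 - 1/2) + S2/2 ≤ ‖p - c₀‖^2 := by
    rw [hexpand]
    have inner_bound : ∀ i, (r^2 - 1/2) + (w i)/2 ≤ ∑ j, w j * (inner ℝ (v i) (v j) : ℝ) := by
      intro i
      have step : ∀ j, w j * ((r^2 - 1/2) + (if j = i then 1/2 else 0)) ≤
          w j * (inner ℝ (v i) (v j) : ℝ) := by
        intro j
        apply mul_le_mul_of_nonneg_left ?_ (hw0 j)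
        by_cases hji : j = i
        · subst hji
          rw [if_pos rfl, hdiag j]
          linarith
        · rw [if_neg hji]
          have := hij i j
          linarith
      calc (r^2 - 1/2) + (w i)/2
          = ∑ j, w j * ((r^2 - 1/2) + (if j = i then 1/2 else 0)) := by
            have : ∀ j, w j * ((r^2 - 1/2) + (if j = i then 1/2 else 0)) =
                w j * (r^2 - 1/2) + (if j = i then w j / 2 else 0) := by
              intro j; by_cases hji : j = i <;> simp [hji] <;> ring
            rw [Finset.sum_congr rfl (fun j _ => this j), Finset.sum_add_distrib,
              ← Finset.sum_mul, hwsum, one_mul, Finset.sum_ite_eq' Finset.univ i (fun j => w j / 2)]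
            simp
        _ ≤ ∑ j, w j * (inner ℝ (v i) (v j) : ℝ) := Finset.sum_le_sum fun j _ => step j
    calc (r^2 - 1/2) + S2/2
        = ∑ i, (w i * (r^2 - 1/2) + (w i)^2/2) := by
          rw [Finset.sum_add_distrib, ← Finset.sum_mul, hwsum, one_mul, hS2def,
            ← Finset.sum_div]
      _ ≤ ∑ i, w i * ((r^2 - 1/2) + (w i)/2) := by
          apply Finset.sum_le_sum
          intro i _
          have : w i * ((r^2 - 1/2) + (w i)/2) = w i * (r^2 - 1/2) + (w i)^2/2 := by ring
          rw [this]
      _ ≤ ∑ i, w i * (∑ j, w j * (inner ℝ (v i) (v j) : ℝ)) := by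
          apply Finset.sum_le_sum
          intro i _
          exact mul_le_mul_of_nonneg_left (inner_bound i) (hw0 i)
  linarith

lemma complete_mem {Ω : Set Plane} (hc : IsCompact Ω) (hconv : Convex ℝ Ω) (hne : Ω.Nonempty)
    (hw : HasConstantWidth1 Ω) {y : Plane} (h : ∀ x ∈ Ω, dist y x ≤ 1) : y ∈ Ω := by
  by_contra hy
  obtain ⟨u, ε, hu1, hε, hsep⟩ := sep_point hconv hc.isClosed hne hy
  have hcont : Continuous (fun z : Plane => (inner ℝ z u : ℝ)) :=
    Continuous.inner continuous_id continuous_const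
  obtain ⟨x₁, hx₁Ω, hx₁max⟩ := hc.exists_isMaxOn hne hcont.continuousOn
  obtain ⟨x₀, hx₀Ω, hx₀min⟩ := hc.exists_isMinOn hne hcont.continuousOn
  have hM : sSup ((fun x => (inner ℝ x u : ℝ)) '' Ω) = (inner ℝ x₁ u : ℝ) :=
    IsGreatest.csSup_eq ⟨mem_image_of_mem _ hx₁Ω, by rintro a ⟨b, hb, rfl⟩; exact hx₁max hb⟩
  have hm : sInf ((fun x => (inner ℝ x u : ℝ)) '' Ω) = (inner ℝ x₀ u : ℝ) :=
    IsLeast.csInf_eq ⟨mem_image_of_mem _ hx₀Ω, by rintro a ⟨b, hb, rfl⟩; exact hx₀min hb⟩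
  have hw1 := hw u hu1
  rw [hM, hm] at hw1
  have h1 : (inner ℝ (x₀ - y) u : ℝ) = (inner ℝ x₀ u : ℝ) - (inner ℝ y u : ℝ) := inner_sub_left _ _ _
  have h2 := hsep x₀ hx₀Ω
  have h3 : (inner ℝ (x₁ - y) u : ℝ) ≤ dist x₁ y := by
    calc (inner ℝ (x₁ - y) u : ℝ) ≤ ‖x₁ - y‖ * ‖u‖ := real_inner_le_norm _ _
      _ = dist x₁ y := by rw [hu1, mul_one, dist_eq_norm]
  have h4 : (inner ℝ (x₁ - y) u : ℝ) = (inner ℝ x₁ u : ℝ) - (inner ℝ y u : ℝ) := inner_sub_left _ _ _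
  have h5 := h x₁ hx₁Ω
  rw [dist_comm] at h5
  linarith

lemma sqrt3_le_3 : Real.sqrt 3 ≤ 3 := by
  nlinarith [Real.sq_sqrt (by norm_num : (0:ℝ) ≤ 3), Real.sqrt_nonneg 3]

lemma sqrt3_pos : (0:ℝ) < Real.sqrt 3 := Real.sqrt_pos.2 (by norm_num)

lemma pt_apply0 (a b : ℝ) : (pt a b) 0 = a := rfl
lemma pt_apply1 (a b : ℝ) : (pt a b) 1 = b := rfl

lemma dist_pt (a b c d : ℝ) : dist (pt a b) (pt c d) = Real.sqrt ((a-c)^2 + (b-d)^2) := by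
  rw [EuclideanSpace.dist_eq]
  simp [pt, Fin.sum_univ_two, Real.dist_eq]

-- the lower bound for all bodies of constant width 1
lemma part1 {Ω : Set Plane} (hΩ : IsConvexBody Ω) (hw : HasConstantWidth1 Ω) :
    1 - Real.sqrt 3 / 3 ≤ inradius Ω := by
  obtain ⟨hcomp, hconv, hint⟩ := hΩ
  obtain ⟨x₀, hx₀⟩ := hint
  have hne : Ω.Nonempty := ⟨x₀, interior_subset hx₀⟩
  obtain ⟨c, hc⟩ := jung hcomp hne (fun x hx y hy => diam_le_one hcomp hw hx hy)
  have hball : closedBall c (1 - Real.sqrt 3 / 3) ⊆ Ω := by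
    intro y hy
    refine complete_mem hcomp hconv hne hw (fun x hx => ?_)
    calc dist y x ≤ dist y c + dist c x := dist_triangle _ _ _
      _ ≤ (1 - Real.sqrt 3 / 3) + Real.sqrt 3 / 3 := by
          have := hc x hx
          have := mem_closedBall.1 hy
          linarith
      _ = 1 := by ring
  have hnonneg : 0 ≤ 1 - Real.sqrt 3 / 3 := by linarith [sqrt3_le_3]
  have hmem : (1 - Real.sqrt 3 / 3) ∈ {r : ℝ | 0 ≤ r ∧ ∃ x : Plane, closedBall x r ⊆ Ω} :=
    ⟨hnonneg, c, hball⟩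
  have hbdd : BddAbove {r : ℝ | 0 ≤ r ∧ ∃ x : Plane, closedBall x r ⊆ Ω} := by
    refine ⟨1, fun r hr => ?_⟩
    obtain ⟨hr0, x, hx⟩ := hr
    set u : Plane := pt 1 0 with hu
    have hu1 : ‖u‖ = 1 := by
      rw [hu, EuclideanSpace.norm_eq]
      simp [pt, Fin.sum_univ_two]
    have hmem1 : x + r • u ∈ Ω := hx (by
      simp [mem_closedBall, dist_eq_norm, norm_smul, abs_of_nonneg hr0, hu1])
    have hmem2 : x - r • u ∈ Ω := hx (by
      simp [mem_closedBall, dist_eq_norm, norm_smul, abs_of_nonneg hr0, hu1])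
    have hdd : dist (x + r • u) (x - r • u) ≤ 1 := diam_le_one hcomp hw hmem1 hmem2
    have : dist (x + r • u) (x - r • u) = 2 * r := by
      rw [dist_eq_norm]
      have : x + r • u - (x - r • u) = (2*r) • u := by
        rw [two_mul, add_smul]; abel
      rw [this, norm_smul, hu1, mul_one, Real.norm_eq_abs, abs_of_nonneg (by linarith)]
    linarith
  exact le_csSup hbdd hmem

-- Reuleaux part
lemma sqrt_third : Real.sqrt (1/3) = Real.sqrt 3 / 3 := by
  have h : (Real.sqrt 3 / 3)^2 = 1/3 := by
    rw [div_pow, Real.sq_sqrt (by norm_num : (0:ℝ) ≤ 3)]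
    norm_num
  rw [← h, Real.sqrt_sq (by positivity)]

lemma dist_cv1 : dist (pt (1/2) (Real.sqrt 3 / 6)) (pt 0 0) = Real.sqrt 3 / 3 := by
  rw [dist_pt, ← sqrt_third]
  congr 1
  have h := Real.sq_sqrt (by norm_num : (0:ℝ) ≤ 3)
  nlinarith [h]

lemma dist_cv2 : dist (pt (1/2) (Real.sqrt 3 / 6)) (pt 1 0) = Real.sqrt 3 / 3 := by
  rw [dist_pt, ← sqrt_third]
  congr 1
  have h := Real.sq_sqrt (by norm_num : (0:ℝ) ≤ 3)
  nlinarith [h]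

lemma dist_cv3 : dist (pt (1/2) (Real.sqrt 3 / 6)) (pt (1/2) (Real.sqrt 3 / 2)) = Real.sqrt 3 / 3 := by
  rw [dist_pt, ← sqrt_third]
  congr 1
  have h := Real.sq_sqrt (by norm_num : (0:ℝ) ≤ 3)
  nlinarith [h]

lemma part2 : inradius ReuleauxTriangle = 1 - Real.sqrt 3 / 3 := by
  set c : Plane := pt (1/2) (Real.sqrt 3 / 6) with hcdef
  set v1 : Plane := pt 0 0 with hv1
  set v2 : Plane := pt 1 0 with hv2
  set v3 : Plane := pt (1/2) (Real.sqrt 3 / 2) with hv3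
  have hs3 := sqrt3_le_3
  have hs3p := sqrt3_pos
  have hnonneg : 0 ≤ 1 - Real.sqrt 3 / 3 := by linarith
  have hsum3 : (v1 - c) + (v2 - c) + (v3 - c) = 0 := by
    ext i
    fin_cases i <;>
      simp [hv1, hv2, hv3, hcdef, pt, PiLp.sub_apply, PiLp.add_apply, PiLp.zero_apply] <;> ring
  -- upper bound for elements of the inradius-defining set
  have hub : ∀ r ∈ {r : ℝ | 0 ≤ r ∧ ∃ x : Plane, closedBall x r ⊆ ReuleauxTriangle},
      r ≤ 1 - Real.sqrt 3 / 3 := by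
    rintro r ⟨hr0, x, hx⟩
    have hsub1 : closedBall x r ⊆ closedBall v1 1 := fun y hy => ((hx hy).1).1
    have hsub2 : closedBall x r ⊆ closedBall v2 1 := fun y hy => ((hx hy).1).2
    have hsub3 : closedBall x r ⊆ closedBall v3 1 := fun y hy => (hx hy).2
    have h1 := ball_in_ball hr0 hsub1
    have h2 := ball_in_ball hr0 hsub2
    have h3 := ball_in_ball hr0 hsub3
    -- one of the vertices is at distance ≥ √3/3 from x
    have hkey : ∃ v ∈ ({v1, v2, v3} : Set Plane), Real.sqrt 3 / 3 ≤ dist x v := by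
      by_contra hcon
      push_neg at hcon
      have hip : ∀ v : Plane, dist c v = Real.sqrt 3 / 3 → dist x v < Real.sqrt 3 / 3 →
          (inner ℝ (v - c) (c - x) : ℝ) < 0 := by
        intro v hdc hdx
        have hexp : dist x v ^2 = dist c v ^2 + 2*(inner ℝ (v - c) (c - x) : ℝ) + dist c x ^2 := by
          rw [dist_eq_norm, dist_eq_norm, dist_eq_norm]
          have : x - v = -((v - c) + (c - x)) := by abel
          rw [this, norm_neg, norm_add_sq_real, norm_sub_rev c v]
        nlinarith [sq_nonneg (dist c x), dist_nonneg (x := x) (y := v), hdx,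
          sq_nonneg (dist x v)]
      have hi1 := hip v1 dist_cv1 (hcon v1 (by simp))
      have hi2 := hip v2 dist_cv2 (hcon v2 (by simp))
      have hi3 := hip v3 dist_cv3 (hcon v3 (by simp))
      have hzero : (inner ℝ ((v1 - c) + (v2 - c) + (v3 - c)) (c - x) : ℝ) = 0 := by
        rw [hsum3, inner_zero_left]
      rw [inner_add_left, inner_add_left] at hzero
      linarith
    obtain ⟨v, hv, hdv⟩ := hkey
    rcases hv with rfl | rfl | rfl
    · linarith
    · linarith
    · linarith
  have hcR : c ∈ ReuleauxTriangle := by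
    refine ⟨⟨?_, ?_⟩, ?_⟩ <;> rw [mem_closedBall]
    · rw [← hv1, dist_cv1]; linarith
    · rw [← hv2, dist_cv2]; linarith
    · rw [← hv3, dist_cv3]; linarith
  have hne : {r : ℝ | 0 ≤ r ∧ ∃ x : Plane, closedBall x r ⊆ ReuleauxTriangle}.Nonempty := by
    refine ⟨0, le_refl 0, c, ?_⟩
    intro y hy
    rw [mem_closedBall, dist_le_zero] at hy
    rwa [hy]
  have hball : closedBall c (1 - Real.sqrt 3 / 3) ⊆ ReuleauxTriangle := by
    intro y hy
    rw [mem_closedBall] at hy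
    have hyd : ∀ v : Plane, dist c v = Real.sqrt 3 / 3 → dist y v ≤ 1 := by
      intro v hdc
      calc dist y v ≤ dist y c + dist c v := dist_triangle _ _ _
        _ ≤ (1 - Real.sqrt 3 / 3) + Real.sqrt 3 / 3 := by rw [hdc]; linarith
        _ = 1 := by ring
    exact ⟨⟨hyd v1 dist_cv1, hyd v2 dist_cv2⟩, hyd v3 dist_cv3⟩
  refine le_antisymm (csSup_le hne hub) (le_csSup ⟨1 - Real.sqrt 3 / 3, hub⟩ ⟨hnonneg, c, hball⟩)

/-- The Reuleaux triangle minimizes the inradius among planar convex bodies of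
constant width 1: every such body has inradius at least `1 − √3/3`, and the
Reuleaux triangle has inradius exactly `1 − √3/3`. -/
theorem reuleaux_minimizes_inradius :
    (∀ Ω : Set Plane, IsConvexBody Ω → HasConstantWidth1 Ω →
      1 - Real.sqrt 3 / 3 ≤ inradius Ω) ∧
    inradius ReuleauxTriangle = 1 - Real.sqrt 3 / 3 :=
  ⟨fun _ hΩ hw => part1 hΩ hw, part2⟩
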